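/- Let $f$ be convex and continuously differentiable, $X$ compact, $Z$ a linear subspace, $\rho>0$, $\omega\in Z^\perp$ fixed. Suppose $(x^k,z^k)\in\operatorname{conv}(X)\times Z$ satisfy $z^k\in\arg\min_{z\in Z}\|Qx^k-z\|$ for each $k$ and $(x^k,z^k)\to(x^*,z^*)$ where $(x^*,z^*)$ minimizes $L_\rho(\cdot,\cdot,\omega)$ over $\operatorname{conv}(X)\times Z$. Then $\lim_{k\to\infty}\widecheck\phi(\omega+\rho(Qx^k-z^k),x^k)=L_\rho(x^*,z^*,\omega)+\tfrac{\rho}{2}\|Qx^*-z^*\|_2^2$. -/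

import Mathlib

open RealInnerProductSpace Filter Topology

/-- `φ̌(ω, x̄)`, minimized over `conv(X)`. -/
noncomputable def phiCheck {n q : ℕ} (f : EuclideanSpace ℝ (Fin n) → ℝ)
    (Q : EuclideanSpace ℝ (Fin n) →ₗ[ℝ] EuclideanSpace ℝ (Fin q))
    (X : Set (EuclideanSpace ℝ (Fin n))) (ω : EuclideanSpace ℝ (Fin q))
    (xbar : EuclideanSpace ℝ (Fin n)) : ℝ :=
  sInf {r : ℝ | ∃ x ∈ convexHull ℝ X, r = f xbar + ⟪gradient f xbar, x - xbar⟫ + ⟪ω, Q x⟫}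

noncomputable def augL {n q : ℕ} (f : EuclideanSpace ℝ (Fin n) → ℝ)
    (Q : EuclideanSpace ℝ (Fin n) →ₗ[ℝ] EuclideanSpace ℝ (Fin q)) (ρ : ℝ)
    (x : EuclideanSpace ℝ (Fin n)) (z ω : EuclideanSpace ℝ (Fin q)) : ℝ :=
  f x + ⟪ω, Q x⟫ + ρ / 2 * ‖Q x - z‖ ^ 2

section aux

private lemma deriv_nonneg_of_min' (φ : ℝ → ℝ) (D : ℝ) (hD : HasDerivAt φ D 0)
    (hm : ∀ t ∈ Set.Ioc (0:ℝ) 1, φ 0 ≤ φ t) : 0 ≤ D := by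
  have h := hasDerivAt_iff_tendsto_slope.mp hD
  have h2 : Tendsto (slope φ 0) (𝓝[>] (0:ℝ)) (𝓝 D) :=
    h.mono_left (nhdsWithin_mono _ fun x hx => ne_of_gt hx)
  refine ge_of_tendsto h2 ?_
  filter_upwards [Ioc_mem_nhdsGT (zero_lt_one)] with t ht
  have h3 := hm t ht
  rw [slope_def_field]
  have : (0:ℝ) < t := ht.1
  exact div_nonneg (by linarith) (by linarith)

private noncomputable def linInf' {m : ℕ} (K : Set (EuclideanSpace ℝ (Fin m)))
    (v : EuclideanSpace ℝ (Fin m)) : ℝ :=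
  sInf ((fun y => ⟪v, y⟫) '' K)

private lemma linInf'_bddBelow {m : ℕ} {K : Set (EuclideanSpace ℝ (Fin m))} {R : ℝ}
    (hR : ∀ y ∈ K, ‖y‖ ≤ R) (v : EuclideanSpace ℝ (Fin m)) :
    BddBelow ((fun y => ⟪v, y⟫) '' K) := by
  refine ⟨-(‖v‖ * R), ?_⟩
  rintro r ⟨y, hy, rfl⟩
  have h1 : |⟪v, y⟫| ≤ ‖v‖ * ‖y‖ := abs_real_inner_le_norm v y
  have h2 : ‖v‖ * ‖y‖ ≤ ‖v‖ * R := by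
    have := hR y hy
    nlinarith [norm_nonneg v]
  have := abs_le.mp (h1.trans h2)
  linarith [this.1]

private lemma linInf'_cont {m : ℕ} {K : Set (EuclideanSpace ℝ (Fin m))} (hKne : K.Nonempty) {R : ℝ}
    (hR0 : 0 ≤ R) (hR : ∀ y ∈ K, ‖y‖ ≤ R) : Continuous (linInf' K) := by
  have key : ∀ v w, linInf' K v ≤ linInf' K w + R * ‖v - w‖ := by
    intro v w
    have h1 : linInf' K v - R * ‖v - w‖ ≤ linInf' K w := by
      refine le_csInf (hKne.image _) ?_
      rintro r ⟨y, hy, rfl⟩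
      have h2 : linInf' K v ≤ ⟪v, y⟫ := csInf_le (linInf'_bddBelow hR v) ⟨y, hy, rfl⟩
      have h3 : ⟪v, y⟫ = ⟪w, y⟫ + ⟪v - w, y⟫ := by rw [inner_sub_left]; ring
      have h4 : |⟪v - w, y⟫| ≤ ‖v - w‖ * ‖y‖ := abs_real_inner_le_norm _ _
      have h5 : ‖v - w‖ * ‖y‖ ≤ R * ‖v - w‖ := by
        have := hR y hy
        nlinarith [norm_nonneg (v - w)]
      have := (abs_le.mp (h4.trans h5)).2
      linarith
    linarith
  have hlip : LipschitzWith ⟨R, hR0⟩ (linInf' K) := by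
    apply LipschitzWith.of_dist_le_mul
    intro v w
    rw [Real.dist_eq, dist_eq_norm]
    have h1 := key v w
    have h2 := key w v
    rw [norm_sub_rev w v] at h2
    rw [abs_le]
    show -(R * ‖v - w‖) ≤ linInf' K v - linInf' K w ∧ linInf' K v - linInf' K w ≤ R * ‖v - w‖
    constructor <;> linarith
  exact hlip.continuous

end aux

private lemma phiCheck_eq' {n q : ℕ} (f : EuclideanSpace ℝ (Fin n) → ℝ)
    (Q : EuclideanSpace ℝ (Fin n) →ₗ[ℝ] EuclideanSpace ℝ (Fin q))
    (X : Set (EuclideanSpace ℝ (Fin n)))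
    (hKne : (convexHull ℝ X).Nonempty)
    (hbdd : ∀ v, BddBelow ((fun y => ⟪v, y⟫) '' (convexHull ℝ X)))
    (ω' : EuclideanSpace ℝ (Fin q)) (xb : EuclideanSpace ℝ (Fin n)) :
    phiCheck f Q X ω' xb = f xb - ⟪gradient f xb, xb⟫
      + linInf' (convexHull ℝ X) (gradient f xb + Q.adjoint ω') := by
  set K := convexHull ℝ X
  set g := gradient f xb
  set v := g + Q.adjoint ω' with hv
  set c := f xb - ⟪g, xb⟫ with hc
  have hptw : ∀ y : EuclideanSpace ℝ (Fin n),
      f xb + ⟪g, y - xb⟫ + ⟪ω', Q y⟫ = c + ⟪v, y⟫ := by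
    intro y
    rw [hv, hc, inner_add_left, inner_sub_right, LinearMap.adjoint_inner_left]
    ring
  have hset : {r : ℝ | ∃ y ∈ K, r = f xb + ⟪g, y - xb⟫ + ⟪ω', Q y⟫}
      = (fun s => c + s) '' ((fun y => ⟪v, y⟫) '' K) := by
    ext r
    simp only [Set.mem_setOf_eq, Set.mem_image, exists_exists_and_eq_and]
    constructor
    · rintro ⟨y, hy, rfl⟩; exact ⟨y, hy, (hptw y).symm⟩
    · rintro ⟨y, hy, rfl⟩; exact ⟨y, hy, (hptw y).symm⟩
  unfold phiCheck
  rw [hset]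
  set T := (fun y => ⟪v, y⟫) '' K with hT
  have hTne : T.Nonempty := hKne.image _
  have hTbdd : BddBelow T := hbdd v
  apply le_antisymm
  · have h1 : sInf ((fun s => c + s) '' T) - c ≤ sInf T := by
      refine le_csInf hTne ?_
      intro t ht
      have : sInf ((fun s => c + s) '' T) ≤ c + t := by
        refine csInf_le ?_ ⟨t, ht, rfl⟩
        obtain ⟨b, hb⟩ := hTbdd
        exact ⟨c + b, by rintro r ⟨s, hs, rfl⟩; have := hb hs; simp only []; linarith⟩
      linarith
    unfold linInf'
    linarith
  · refine le_csInf (hTne.image _) ?_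
    rintro r ⟨t, ht, rfl⟩
    have : sInf T ≤ t := csInf_le hTbdd ht
    unfold linInf'
    simp only []
    linarith
theorem stmt6 (n q : ℕ) (f : EuclideanSpace ℝ (Fin n) → ℝ)
    (hf : ConvexOn ℝ Set.univ f) (hfd : ContDiff ℝ 1 f)
    (Q : EuclideanSpace ℝ (Fin n) →ₗ[ℝ] EuclideanSpace ℝ (Fin q))
    (X : Set (EuclideanSpace ℝ (Fin n))) (hX : IsCompact X) (hXne : X.Nonempty)
    (Z : Submodule ℝ (EuclideanSpace ℝ (Fin q))) (ρ : ℝ) (hρ : 0 < ρ)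
    (ω : EuclideanSpace ℝ (Fin q)) (hω : ω ∈ Zᗮ)
    (x : ℕ → EuclideanSpace ℝ (Fin n)) (z : ℕ → EuclideanSpace ℝ (Fin q))
    (hxk : ∀ k, x k ∈ convexHull ℝ X) (hzk : ∀ k, z k ∈ Z)
    (hzmin : ∀ k, ∀ w ∈ Z, ‖Q (x k) - z k‖ ≤ ‖Q (x k) - w‖)
    (xstar : EuclideanSpace ℝ (Fin n)) (zstar : EuclideanSpace ℝ (Fin q))
    (hxs : xstar ∈ convexHull ℝ X) (hzs : zstar ∈ Z)
    (hmin : ∀ x' ∈ convexHull ℝ X, ∀ z' ∈ Z,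
      augL f Q ρ xstar zstar ω ≤ augL f Q ρ x' z' ω)
    (hconv : Tendsto (fun k => (x k, z k)) atTop (𝓝 (xstar, zstar))) :
    Tendsto (fun k => phiCheck f Q X (ω + ρ • (Q (x k) - z k)) (x k)) atTop
      (𝓝 (augL f Q ρ xstar zstar ω + ρ / 2 * ‖Q xstar - zstar‖ ^ 2)) := by
  classical
  set K := convexHull ℝ X with hKdef
  have hKconv : Convex ℝ K := convex_convexHull ℝ X
  have hKne : K.Nonempty := hXne.mono (subset_convexHull ℝ X)
  have hKbd : Bornology.IsBounded K := isBounded_convexHull.mpr hX.isBounded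
  obtain ⟨R₀, hR₀⟩ := hKbd.exists_norm_le
  set R := max R₀ 0 with hRdef
  have hR0 : (0:ℝ) ≤ R := le_max_right _ _
  have hR : ∀ y ∈ K, ‖y‖ ≤ R := fun y hy => (hR₀ y hy).trans (le_max_left _ _)
  have hbdd : ∀ v, BddBelow ((fun y => ⟪v, y⟫) '' K) := linInf'_bddBelow hR
  -- continuity ingredients
  have hgc : Continuous (gradient f) := by
    have h1 : Continuous (fderiv ℝ f) := hfd.continuous_fderiv one_ne_zero
    exact (InnerProductSpace.toDual ℝ (EuclideanSpace ℝ (Fin n))).symm.continuous.comp h1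
  have hfc : Continuous f := hfd.continuous
  have hQc : Continuous Q := Q.continuous_of_finiteDimensional
  have hQac : Continuous (LinearMap.adjoint Q) :=
    (LinearMap.adjoint Q).continuous_of_finiteDimensional
  have hLc : Continuous (linInf' K) := linInf'_cont hKne hR0 hR
  -- sequence limits
  have hxt : Tendsto x atTop (𝓝 xstar) := (continuous_fst.tendsto _).comp hconv
  have hzt : Tendsto z atTop (𝓝 zstar) := (continuous_snd.tendsto _).comp hconv
  set ωs := ω + ρ • (Q xstar - zstar) with hωs
  have hωt : Tendsto (fun k => ω + ρ • (Q (x k) - z k)) atTop (𝓝 ωs) := by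
    refine tendsto_const_nhds.add (Tendsto.const_smul ?_ ρ)
    exact ((hQc.tendsto _).comp hxt).sub hzt
  set vstar := gradient f xstar + LinearMap.adjoint Q ωs with hvstar
  -- orthogonality : ⟪Q xstar - zstar, w⟫ = 0 for w ∈ Z
  have horth : ∀ w ∈ Z, ⟪Q xstar - zstar, w⟫ = 0 := by
    intro w hw
    by_cases hw0 : w = 0
    · simp [hw0]
    set a := Q xstar - zstar with hadef
    have hkey : ∀ t : ℝ, ‖a‖ ^ 2 ≤ ‖a - t • w‖ ^ 2 := by
      intro t
      have hz' : zstar + t • w ∈ Z := Z.add_mem hzs (Z.smul_mem t hw)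
      have h1 := hmin xstar hxs (zstar + t • w) hz'
      unfold augL at h1
      have h2 : Q xstar - (zstar + t • w) = a - t • w := by rw [hadef]; abel
      rw [h2] at h1
      nlinarith
    have hexp : ‖a - (⟪a, w⟫ / ‖w‖ ^ 2) • w‖ ^ 2
        = ‖a‖ ^ 2 - 2 * (⟪a, w⟫ / ‖w‖ ^ 2) * ⟪a, w⟫ + (⟪a, w⟫ / ‖w‖ ^ 2) ^ 2 * ‖w‖ ^ 2 := by
      rw [norm_sub_sq_real, real_inner_smul_right, norm_smul]
      simp only [Real.norm_eq_abs, mul_pow, sq_abs]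
      ring
    have hw2 : (0:ℝ) < ‖w‖ ^ 2 := pow_pos (norm_pos_iff.mpr hw0) 2
    have h3 := hkey (⟪a, w⟫ / ‖w‖ ^ 2)
    rw [hexp] at h3
    have h4 : 2 * (⟪a, w⟫ / ‖w‖ ^ 2) * ⟪a, w⟫ ≤ (⟪a, w⟫ / ‖w‖ ^ 2) ^ 2 * ‖w‖ ^ 2 := by
      linarith
    rw [div_pow] at h4
    have h5 : (⟪a, w⟫ ^ 2 / (‖w‖ ^ 2) ^ 2) * ‖w‖ ^ 2 = ⟪a, w⟫ ^ 2 / ‖w‖ ^ 2 := by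
      field_simp
    rw [h5] at h4
    have h6 : 2 * (⟪a, w⟫ / ‖w‖ ^ 2) * ⟪a, w⟫ = 2 * (⟪a, w⟫ ^ 2 / ‖w‖ ^ 2) := by ring
    rw [h6] at h4
    have h7 : ⟪a, w⟫ ^ 2 / ‖w‖ ^ 2 ≤ 0 := by linarith
    have h8 : ⟪a, w⟫ ^ 2 ≤ 0 := by
      by_contra hcon
      push_neg at hcon
      have := div_pos hcon hw2
      linarith
    have := sq_nonneg ⟪a, w⟫
    have h9 : ⟪a, w⟫ ^ 2 = 0 := le_antisymm h8 this
    exact pow_eq_zero_iff (by norm_num) |>.mp h9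
  -- first-order optimality
  have hfo : ∀ y ∈ K, ⟪vstar, xstar⟫ ≤ ⟪vstar, y⟫ := by
    intro y hy
    set d := y - xstar with hd
    set a := Q xstar - zstar with hadef
    set b := Q d with hb
    set D := ⟪gradient f xstar, d⟫ + ⟪ω, Q d⟫ + ρ * ⟪a, b⟫ with hD
    have hψ : HasDerivAt (fun t : ℝ => augL f Q ρ (xstar + t • d) zstar ω) D 0 := by
      unfold augL
      have hline : HasDerivAt (fun t : ℝ => xstar + t • d) d 0 := by
        simpa using ((hasDerivAt_id (0:ℝ)).smul_const d).const_add xstar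
      have hgx : HasGradientAt f (gradient f xstar) xstar :=
        (hfd.differentiable one_ne_zero xstar).hasGradientAt
      have hfdx' : HasFDerivAt f ((InnerProductSpace.toDual ℝ (EuclideanSpace ℝ (Fin n)))
          (gradient f xstar)) (xstar + (0:ℝ) • d) := by simpa using hgx.hasFDerivAt
      have h1 : HasDerivAt (fun t : ℝ => f (xstar + t • d)) ⟪gradient f xstar, d⟫ 0 := by
        have := hfdx'.comp_hasDerivAt 0 hline
        simpa [InnerProductSpace.toDual_apply_apply, Function.comp_def] using this
      have h2 : HasDerivAt (fun t : ℝ => ⟪ω, Q (xstar + t • d)⟫) ⟪ω, Q d⟫ 0 := by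
        have heq : (fun t : ℝ => ⟪ω, Q (xstar + t • d)⟫)
            = fun t : ℝ => ⟪ω, Q xstar⟫ + t * ⟪ω, b⟫ := by
          funext t
          rw [map_add, map_smul, inner_add_right, real_inner_smul_right]
        rw [heq]
        simpa using (hasDerivAt_mul_const (⟪ω, b⟫)).const_add (⟪ω, Q xstar⟫)
      have h3 : HasDerivAt (fun t : ℝ => ρ / 2 * ‖Q (xstar + t • d) - zstar‖ ^ 2)
          (ρ * ⟪a, b⟫) 0 := by
        have heq : (fun t : ℝ => ρ / 2 * ‖Q (xstar + t • d) - zstar‖ ^ 2)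
            = fun t : ℝ => ρ / 2 * ‖a‖ ^ 2 + (ρ * ⟪a, b⟫) * t + (ρ / 2 * ‖b‖ ^ 2) * t ^ 2 := by
          funext t
          have hQ : Q (xstar + t • d) - zstar = a + t • b := by
            rw [map_add, map_smul, hadef, hb]; abel
          rw [hQ, norm_add_sq_real, real_inner_smul_right, norm_smul]
          simp only [Real.norm_eq_abs, mul_pow, sq_abs]
          ring
        rw [heq]
        have hp1 : HasDerivAt (fun t : ℝ => (ρ * ⟪a, b⟫) * t) (ρ * ⟪a, b⟫) 0 := by
          simpa using (hasDerivAt_id (0:ℝ)).const_mul (ρ * ⟪a, b⟫)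
        have hp2 : HasDerivAt (fun t : ℝ => (ρ / 2 * ‖b‖ ^ 2) * t ^ 2) 0 0 := by
          simpa using (hasDerivAt_pow 2 (0:ℝ)).const_mul (ρ / 2 * ‖b‖ ^ 2)
        simpa [Pi.add_def] using ((hp1.const_add (ρ / 2 * ‖a‖ ^ 2)).add hp2)
      exact (h1.add h2).add h3
    have hψm : ∀ t ∈ Set.Ioc (0:ℝ) 1,
        augL f Q ρ (xstar + (0:ℝ) • d) zstar ω ≤ augL f Q ρ (xstar + t • d) zstar ω := by
      intro t ht
      have hmem : xstar + t • d ∈ K := by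
        have := hKconv.add_smul_sub_mem hxs hy ⟨le_of_lt ht.1, ht.2⟩
        simpa [hd] using this
      have h0 : xstar + (0:ℝ) • d = xstar := by simp
      rw [h0]
      exact hmin _ hmem zstar hzs
    have hD0 : 0 ≤ D := deriv_nonneg_of_min' _ D hψ hψm
    have hDid : D = ⟪vstar, y⟫ - ⟪vstar, xstar⟫ := by
      rw [hD, hvstar, hωs]
      rw [inner_add_left, inner_add_left, LinearMap.adjoint_inner_left,
        LinearMap.adjoint_inner_left, inner_add_left, inner_add_left,
        real_inner_smul_left, real_inner_smul_left]
      have : (d : EuclideanSpace ℝ (Fin n)) = y - xstar := hd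
      rw [hb, hadef, hd]
      rw [map_sub, inner_sub_right, inner_sub_right, inner_sub_right]
      ring
    linarith [hDid ▸ hD0]
  -- value of linInf' at vstar
  have hval : linInf' K vstar = ⟪vstar, xstar⟫ := by
    apply le_antisymm
    · exact csInf_le (hbdd vstar) ⟨xstar, hxs, rfl⟩
    · exact le_csInf (hKne.image _) (by rintro r ⟨y, hy, rfl⟩; exact hfo y hy)
  -- the limit value identity
  have hlimval : f xstar - ⟪gradient f xstar, xstar⟫ + linInf' K vstar
      = augL f Q ρ xstar zstar ω + ρ / 2 * ‖Q xstar - zstar‖ ^ 2 := by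
    rw [hval, hvstar, inner_add_left, LinearMap.adjoint_inner_left, hωs]
    rw [inner_add_left, real_inner_smul_left]
    have h1 : ⟪Q xstar - zstar, Q xstar⟫ = ‖Q xstar - zstar‖ ^ 2 := by
      have h2 : ⟪Q xstar - zstar, Q xstar⟫
          = ⟪Q xstar - zstar, Q xstar - zstar⟫ + ⟪Q xstar - zstar, zstar⟫ := by
        rw [inner_sub_right]; ring
      rw [h2, horth zstar hzs, real_inner_self_eq_norm_sq]
      ring
    rw [h1]
    unfold augL
    ring
  -- rewrite the sequence and conclude
  have hseq : (fun k => phiCheck f Q X (ω + ρ • (Q (x k) - z k)) (x k))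
      = fun k => f (x k) - ⟪gradient f (x k), x k⟫
          + linInf' K (gradient f (x k) + LinearMap.adjoint Q (ω + ρ • (Q (x k) - z k))) := by
    funext k
    exact phiCheck_eq' f Q X hKne hbdd _ _
  rw [hseq, ← hlimval]
  have t1 : Tendsto (fun k => f (x k)) atTop (𝓝 (f xstar)) := (hfc.tendsto _).comp hxt
  have t2 : Tendsto (fun k => ⟪gradient f (x k), x k⟫) atTop
      (𝓝 (⟪gradient f xstar, xstar⟫)) := by
    have : Continuous fun y : EuclideanSpace ℝ (Fin n) => ⟪gradient f y, y⟫ :=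
      hgc.inner continuous_id
    exact (this.tendsto _).comp hxt
  have t3 : Tendsto (fun k => gradient f (x k)
      + LinearMap.adjoint Q (ω + ρ • (Q (x k) - z k))) atTop (𝓝 vstar) := by
    rw [hvstar]
    exact ((hgc.tendsto _).comp hxt).add ((hQac.tendsto _).comp hωt)
  exact ((t1.sub t2).add ((hLc.tendsto _).comp t3))
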